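/- Let A = [[A_ff, A_fc],[A_cf, A_cc]] be invertible, P = [[W],[I]], R = [Z, I], assume K = R·A·P is invertible, let Δ_F be an invertible F×F matrix, and set δ_P = A_ff·W + A_fc. Let E = E_F·(I − P·K⁻¹·R·A) with E_F = I − [[Δ_F, 0],[0, 0]]·A, let 𝓡 = A·E·A⁻¹ be the residual-propagation matrix, and let G = (I − Δ_F·A_ff) + Δ_F·δ_P·K⁻¹·(Z·A_ff + A_cf). Then for every integer k ≥ 1, 𝓡^k = U · G^(k−1) · V, where U is the (F⊕C)×F block-column matrix with F-block Δ_F⁻¹ − A_ff and C-block −(Z·Δ_F⁻¹ + A_cf), and V is the F×(F⊕C) block-row matrix [Δ_F·(I − δ_P·K⁻¹·Z), −Δ_F·δ_P·K⁻¹]. -/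

import Mathlib

open Matrix

private lemma fromBlocks_sub' {α l m n o : Type*} [AddGroup α]
    (a : Matrix n l α) (b : Matrix n m α) (c : Matrix o l α) (d : Matrix o m α)
    (a' : Matrix n l α) (b' : Matrix n m α) (c' : Matrix o l α) (d' : Matrix o m α) :
    fromBlocks a b c d - fromBlocks a' b' c' d'
      = fromBlocks (a - a') (b - b') (c - c') (d - d') := by
  ext (i | i) (j | j) <;> simp

/-- **Outer-product form of powers of the residual propagator.** With
`𝓡 = A·E·A⁻¹` and `G = (I − Δ_F·A_ff) + Δ_F·δ_P·K⁻¹·δ_R`, one has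
`𝓡^k = U·G^(k−1)·V` for all `k ≥ 1`, where
`U = [[Δ_F⁻¹ − A_ff],[−(Z·Δ_F⁻¹ + A_cf)]]` and
`V = [Δ_F·(I − δ_P·K⁻¹·Z), −Δ_F·δ_P·K⁻¹]`. -/
theorem residual_prop_powers_outer_product
    {F C : Type*} [Fintype F] [Fintype C] [DecidableEq F] [DecidableEq C]
    (Aff : Matrix F F ℝ) (Afc : Matrix F C ℝ) (Acf : Matrix C F ℝ) (Acc : Matrix C C ℝ)
    (W : Matrix F C ℝ) (Z : Matrix C F ℝ) (ΔF : Matrix F F ℝ) (hΔF : IsUnit ΔF)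
    (A : Matrix (F ⊕ C) (F ⊕ C) ℝ) (hA : A = fromBlocks Aff Afc Acf Acc) (hAinv : IsUnit A)
    (P : Matrix (F ⊕ C) C ℝ) (hP : P = fromRows W 1)
    (R : Matrix C (F ⊕ C) ℝ) (hR : R = fromCols Z 1)
    (K : Matrix C C ℝ) (hK : K = R * A * P) (hKinv : IsUnit K)
    (δP : Matrix F C ℝ) (hδP : δP = Aff * W + Afc)
    (δR : Matrix C F ℝ) (hδR : δR = Z * Aff + Acf)
    (EF : Matrix (F ⊕ C) (F ⊕ C) ℝ) (hEF : EF = 1 - fromBlocks ΔF 0 0 0 * A)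
    (E : Matrix (F ⊕ C) (F ⊕ C) ℝ) (hE : E = EF * (1 - P * K⁻¹ * R * A))
    (Res : Matrix (F ⊕ C) (F ⊕ C) ℝ) (hRes : Res = A * E * A⁻¹)
    (G : Matrix F F ℝ) (hG : G = (1 - ΔF * Aff) + ΔF * δP * K⁻¹ * δR)
    (U : Matrix (F ⊕ C) F ℝ) (hU : U = fromRows (ΔF⁻¹ - Aff) (-(Z * ΔF⁻¹ + Acf)))
    (V : Matrix F (F ⊕ C) ℝ)
    (hV : V = fromCols (ΔF * (1 - δP * K⁻¹ * Z)) (-(ΔF * δP * K⁻¹))) :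
    ∀ k : ℕ, 1 ≤ k → Res ^ k = U * G ^ (k - 1) * V := by
  have hΔd : IsUnit ΔF.det := (Matrix.isUnit_iff_isUnit_det ΔF).mp hΔF
  have hKd : IsUnit K.det := (Matrix.isUnit_iff_isUnit_det K).mp hKinv
  have hAd : IsUnit A.det := (Matrix.isUnit_iff_isUnit_det A).mp hAinv
  have hΔ1 : ΔF⁻¹ * ΔF = 1 := Matrix.nonsing_inv_mul ΔF hΔd
  have hΔ2 : ΔF * ΔF⁻¹ = 1 := Matrix.mul_nonsing_inv ΔF hΔd
  have hK1 : K * K⁻¹ = 1 := Matrix.mul_nonsing_inv K hKd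
  have hA1 : A * A⁻¹ = 1 := Matrix.mul_nonsing_inv A hAd
  have key3 : Z * ΔF⁻¹ * ΔF = Z := by rw [Matrix.mul_assoc, hΔ1, Matrix.mul_one]
  set M : Matrix C C ℝ := Acf * W + Acc with hM
  have hAP : A * P = fromRows δP M := by
    rw [hA, hP, fromBlocks_mul_fromRows, hδP, hM]
    simp
  have hRA' : R * (A * P) = Z * δP + M := by
    rw [hAP, hR, fromCols_mul_fromRows, one_mul]
  have hKM : K = Z * δP + M := by rw [hK, Matrix.mul_assoc, hRA']
  have hMK : M = K - Z * δP := by rw [hKM]; abel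
  have hResEq : Res = (1 - A * fromBlocks ΔF 0 0 0) * (1 - A * P * K⁻¹ * R) := by
    have h1 : A * E = ((1 - A * fromBlocks ΔF 0 0 0) * (1 - A * P * K⁻¹ * R)) * A := by
      rw [hE, hEF]
      simp only [Matrix.mul_sub, Matrix.sub_mul, Matrix.one_mul, Matrix.mul_one,
        Matrix.mul_assoc]
      try abel
    rw [hRes, h1, Matrix.mul_assoc, hA1, Matrix.mul_one]
  have hADblk : A * fromBlocks ΔF 0 0 0 = fromBlocks (Aff * ΔF) 0 (Acf * ΔF) 0 := by
    rw [hA, fromBlocks_multiply]; simp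
  have hAPKR : A * P * K⁻¹ * R
      = fromBlocks (δP * K⁻¹ * Z) (δP * K⁻¹) (M * K⁻¹ * Z) (M * K⁻¹) := by
    rw [hAP, hR, fromRows_mul, fromRows_mul_fromCols]
    simp
  have hResBlk : Res = fromBlocks
      (1 - Aff * ΔF) 0 (-(Acf * ΔF)) 1 *
      fromBlocks (1 - δP * K⁻¹ * Z) (-(δP * K⁻¹)) (-(M * K⁻¹ * Z)) (1 - M * K⁻¹) := by
    rw [hResEq, hADblk, hAPKR, ← fromBlocks_one, fromBlocks_sub', fromBlocks_sub']
    congr 1 <;> simp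
  have hUV : Res = U * V := by
    rw [hResBlk, hU, hV, fromRows_mul_fromCols, hMK]
    congr 1 <;>
      simp only [fromBlocks_multiply, Matrix.mul_sub, Matrix.sub_mul, Matrix.mul_add,
        Matrix.add_mul, Matrix.mul_neg, Matrix.neg_mul, Matrix.mul_one, Matrix.one_mul,
        Matrix.zero_mul, Matrix.mul_zero, add_zero, zero_add, neg_neg, neg_add,
        ← Matrix.mul_assoc, hΔ1, hK1, key3] <;>
      try abel
  have hVU : V * U = G := by
    rw [hV, hU, fromCols_mul_fromRows, hG, hδR]
    simp only [Matrix.mul_sub, Matrix.sub_mul, Matrix.mul_add, Matrix.add_mul,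
      Matrix.mul_neg, Matrix.neg_mul, Matrix.mul_one, Matrix.one_mul, neg_neg, neg_add,
      ← Matrix.mul_assoc, hΔ2, hΔ1, key3]
    abel
  intro k hk
  obtain ⟨n, rfl⟩ : ∃ n, k = n + 1 := ⟨k - 1, (Nat.succ_pred_eq_of_pos hk).symm⟩
  simp only [Nat.add_sub_cancel]
  induction n with
  | zero => simp [hUV]
  | succ n ih =>
      have hk' : 1 ≤ n + 1 := Nat.succ_le_succ (Nat.zero_le n)
      calc Res ^ (n + 1 + 1) = Res ^ (n + 1) * Res := by rw [pow_succ]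
        _ = U * G ^ n * V * (U * V) := by rw [ih hk', hUV]
        _ = U * G ^ n * (V * U) * V := by simp only [Matrix.mul_assoc]
        _ = U * G ^ (n + 1) * V := by rw [hVU, pow_succ]; simp only [Matrix.mul_assoc]
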